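/- Let ℓ ≥ 1 and define, for i ∈ {0,1,...,ℓ}, the quantum integer [n]_i in ℤ[π]/(π²-1)[q,q⁻¹] by [n]_0 = ((qπ)ⁿ - q⁻ⁿ)/(qπ - q⁻¹) and [n]_i = [n]_{q_i} for i > 0, and let [n]_0! = [1]_0[2]_0⋯[n]_0. Let the bar involution be the ℤ[π]-linear map sending qᵏ ↦ q⁻ᵏ. Then for all n ∈ ℕ, the bar involution satisfies bar([2n]_0!) = πⁿ · [2n]_0!. -/

import Mathlib

/-!
Statement 0: In the ring `ℤ^π[q,q⁻¹] = (ℤ[π]/(π²-1))[q,q⁻¹]`, with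
`[n]₀ = ((qπ)ⁿ - q⁻ⁿ)/(qπ - q⁻¹)` and `[m]₀! = [1]₀⋯[m]₀`, the bar involution
(the `ℤ[π]/(π²-1)`-linear map `qᵏ ↦ q⁻ᵏ`) satisfies `bar([2n]₀!) = πⁿ [2n]₀!`.
-/

noncomputable section

open LaurentPolynomial

/-- The ring `ℤ[π]/(π² - 1)`. -/
abbrev Zpi : Type := Polynomial ℤ ⧸ Ideal.span ({Polynomial.X ^ 2 - 1} : Set (Polynomial ℤ))

/-- The image `π` of `X` in `ℤ[π]/(π² - 1)`. -/
def piE : Zpi := Ideal.Quotient.mk _ Polynomial.X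

/-- The quantum integer `[n]₀ = ((qπ)ⁿ - q⁻ⁿ)/(qπ - q⁻¹)`, written via the geometric sum
`∑_{j<n} (qπ)^j q^{-(n-1-j)}` (so that no division is needed); here `q = T 1`. -/
def qint0 (n : ℕ) : LaurentPolynomial Zpi :=
  ∑ j ∈ Finset.range n, (C piE * T 1) ^ j * T ((j : ℤ) - ((n : ℤ) - 1))

/-- The quantum factorial `[m]₀! = [1]₀ [2]₀ ⋯ [m]₀`. -/
def qfact0 (m : ℕ) : LaurentPolynomial Zpi :=
  ∏ j ∈ Finset.range m, qint0 (j + 1)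

lemma piE_sq : piE ^ 2 = 1 := by
  have h : piE ^ 2 - 1 = 0 := by
    rw [piE, ← map_pow, ← map_one (Ideal.Quotient.mk _), ← map_sub,
      Ideal.Quotient.eq_zero_iff_mem]
    exact Ideal.subset_span rfl
  linear_combination h

lemma CpiE_sq : (C piE : LaurentPolynomial Zpi) ^ 2 = 1 := by
  rw [← map_pow, piE_sq, map_one]

lemma invert_qint0 (m : ℕ) :
    LaurentPolynomial.invert (qint0 (m + 1)) = C piE ^ m * qint0 (m + 1) := by
  rw [qint0, map_sum, Finset.mul_sum, ← Finset.sum_range_reflect]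
  refine Finset.sum_congr rfl fun j hj => ?_
  have hj' : j ≤ m := Nat.lt_succ_iff.mp (Finset.mem_range.mp hj)
  have term_eq : ∀ (k : ℕ) (a : ℤ), (C piE * T 1) ^ k * T a
      = C (piE ^ k) * T ((k : ℤ) + a) := by
    intro k a
    rw [mul_pow (M := LaurentPolynomial Zpi), ← map_pow, T_pow, mul_assoc, ← T_add, mul_one]
  rw [term_eq, term_eq, map_mul, invert_C, invert_T]
  simp only [Nat.add_sub_cancel]
  have hpow : piE ^ (m - j) = piE ^ (m + j) := by
    calc piE ^ (m - j) = piE ^ (m - j) * (piE ^ 2) ^ j := by rw [piE_sq]; ring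
      _ = piE ^ (m - j + 2 * j) := by rw [← pow_mul, ← pow_add]
      _ = piE ^ (m + j) := by congr 1; omega
  rw [hpow, pow_add, map_mul, map_pow, mul_assoc]
  congr 1
  push_cast [hj']
  ring

theorem stmt0 (n : ℕ) :
    LaurentPolynomial.invert (qfact0 (2 * n)) = C piE ^ n * qfact0 (2 * n) := by
  rw [qfact0, map_prod]
  have : ∀ j ∈ Finset.range (2 * n),
      LaurentPolynomial.invert (qint0 (j + 1)) = C piE ^ j * qint0 (j + 1) :=
    fun j _ => invert_qint0 j
  rw [Finset.prod_congr rfl this, Finset.prod_mul_distrib, Finset.prod_pow_eq_pow_sum,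
    Finset.sum_range_id]
  have : (C piE : LaurentPolynomial Zpi) ^ (2 * n * (2 * n - 1) / 2) = C piE ^ n := by
    rcases n with _ | k
    · simp
    · have h : 2 * (k + 1) * (2 * (k + 1) - 1) / 2 = (k + 1) + 2 * ((k + 1) * k) := by
        rw [mul_assoc, Nat.mul_div_cancel_left _ (by norm_num : 0 < 2)]
        have h1 : 2 * (k + 1) - 1 = 2 * k + 1 := rfl
        rw [h1]; ring
      rw [h, pow_add, pow_mul, CpiE_sq, one_pow, mul_one]
  rw [this]
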